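/- The sequence φ_n defined by the inductive formula φ_1(b) = b, φ_2(b) = b²(2-b), and φ_n(b) = bⁿ + b(1-b)φ_{n-1}(b) + Σ_{ℓ=2}^{n-1} b^ℓ(1-b)[φ_{n-ℓ+1}(b) + (1-b)φ_{n-ℓ}(b)] for n ≥ 3, satisfies the linear recurrence φ_n(b) = b(2-b²)φ_{n-1}(b) - b³(1-b)φ_{n-2}(b) for all n ≥ 3 and all real b. -/

import Mathlib

theorem stmt4 (φ : ℕ → ℝ → ℝ)
    (h1 : ∀ b : ℝ, φ 1 b = b)
    (h2 : ∀ b : ℝ, φ 2 b = b ^ 2 * (2 - b))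
    (h3 : ∀ n, 3 ≤ n → ∀ b : ℝ,
      φ n b = b ^ n + b * (1 - b) * φ (n - 1) b +
        ∑ ℓ ∈ Finset.Icc 2 (n - 1),
          b ^ ℓ * (1 - b) * (φ (n - ℓ + 1) b + (1 - b) * φ (n - ℓ) b)) :
    ∀ n, 3 ≤ n → ∀ b : ℝ,
      φ n b = b * (2 - b ^ 2) * φ (n - 1) b - b ^ 3 * (1 - b) * φ (n - 2) b := by
  intro n hn b
  rcases Nat.lt_or_ge n 4 with h4 | h4
  · have hn3 : n = 3 := by omega
    subst hn3
    have e3 := h3 3 (by norm_num) b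
    norm_num [Finset.Icc_self, Finset.sum_singleton] at e3
    rw [e3]
    norm_num [h1, h2]
    ring
  · obtain ⟨k, rfl⟩ := Nat.exists_eq_add_of_le h4
    have e1 := h3 (4 + k) (by omega) b
    have e2 := h3 (3 + k) (by omega) b
    have hi1 : 4 + k - 1 = 3 + k := by omega
    have hi2 : 4 + k - 2 = 2 + k := by omega
    have hi3 : 3 + k - 1 = 2 + k := by omega
    rw [hi1] at e1
    rw [hi3] at e2
    rw [hi1, hi2]
    -- split off ℓ = 2 and reindex the rest
    have hsplit : (∑ ℓ ∈ Finset.Icc 2 (3 + k),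
          b ^ ℓ * (1 - b) * (φ (4 + k - ℓ + 1) b + (1 - b) * φ (4 + k - ℓ) b))
        = b ^ 2 * (1 - b) * (φ (3 + k) b + (1 - b) * φ (2 + k) b)
          + b * ∑ ℓ ∈ Finset.Icc 2 (2 + k),
              b ^ ℓ * (1 - b) * (φ (3 + k - ℓ + 1) b + (1 - b) * φ (3 + k - ℓ) b) := by
      rw [Finset.Icc_eq_cons_Ioc (by omega), Finset.sum_cons]
      have h42 : 4 + k - 2 + 1 = 3 + k := by omega
      have h42' : 4 + k - 2 = 2 + k := by omega
      rw [h42, h42']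
      congr 1
      rw [← Finset.Icc_add_one_left_eq_Ioc]
      have hmap : Finset.Icc (2 + 1) (2 + k + 1)
          = Finset.map (addRightEmbedding 1) (Finset.Icc 2 (2 + k)) := by
        rw [Finset.map_add_right_Icc]
      have h23 : Nat.succ 2 = 2 + 1 := rfl
      have h2k3 : 3 + k = 2 + k + 1 := by omega
      rw [h2k3, hmap, Finset.sum_map, Finset.mul_sum]
      apply Finset.sum_congr rfl
      intro ℓ hℓ
      simp only [Finset.mem_Icc] at hℓ
      simp only [addRightEmbedding_apply]
      have hA : 4 + k - (ℓ + 1) + 1 = 3 + k - ℓ + 1 := by omega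
      have hB : 4 + k - (ℓ + 1) = 3 + k - ℓ := by omega
      rw [hA, hB]
      ring
    rw [hsplit] at e1
    have hpow : b ^ (4 + k) = b * b ^ (3 + k) := by ring
    linear_combination e1 - b * e2
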